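/- Every continuous polynomial map f : ℝ_{≥0} → ℝ of degree ≤ d (where ℝ_{≥0} is the additive semigroup of nonnegative reals and ℝ the additive group of reals) is a polynomial in the usual sense: there exist real coefficients a₀, a₁, …, a_d such that f(t) = a₀ + a₁t + ⋯ + a_d t^d for all t ≥ 0. -/

import Mathlib

namespace PaperPoly

/-- `ADegLE d f` means that `f : S → G`, from an additive commutative semigroup to an
additive commutative group, is a polynomial map of degree at most `d ∈ ℕ`: the base case
`ADegLE 0 f` means `f` is constant, and `ADegLE (d+1) f` means that for every `s : S` the
difference map `D_s f : t ↦ f (s+t) - f t` satisfies `ADegLE d`. -/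
def ADegLE {S : Type*} [AddCommSemigroup S] {G : Type*} [AddCommGroup G] :
    ℕ → (S → G) → Prop
  | 0 => fun f => ∀ t t' : S, f t = f t'
  | d + 1 => fun f => ∀ s : S, ADegLE d (fun t => f (s + t) - f t)

open Polynomial

private 
lemma polyext {p q : ℝ[X]} (h : ∀ t : NNReal, p.eval (t : ℝ) = q.eval (t : ℝ)) : p = q := by
  apply Polynomial.eq_of_infinite_eval_eq
  refine (Set.Ici_infinite (0:ℝ)).mono ?_
  intro x hx
  exact h ⟨x, hx⟩

lemma coeff_taylor_top {p : ℝ[X]} {d : ℕ} (hp : p.natDegree ≤ d) (r : ℝ) :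
    (Polynomial.taylor r p).coeff d = p.coeff d := by
  rw [Polynomial.taylor_coeff]
  have h : Polynomial.hasseDeriv d p = Polynomial.C (p.coeff d) := by
    ext n
    rw [Polynomial.hasseDeriv_coeff, Polynomial.coeff_C]
    cases n with
    | zero => simp
    | succ k =>
      have hz : p.coeff (k + 1 + d) = 0 := coeff_eq_zero_of_natDegree_lt (by omega)
      simp [hz]
  rw [h, Polynomial.eval_C]


private 
lemma dense_ratlike : Dense {x : NNReal | ∃ m n : ℕ, 0 < n ∧ x = (m : NNReal) / (n : NNReal)} := by
  apply dense_of_exists_between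
  intro a b hab
  obtain ⟨q, hq1, hq2⟩ := exists_rat_btwn (show (a : ℝ) < (b : ℝ) from hab)
  have hq0 : (0:ℝ) ≤ (q : ℝ) := le_of_lt (lt_of_le_of_lt a.2 hq1)
  have hq0' : 0 ≤ q := by exact_mod_cast hq0
  refine ⟨(q.num.toNat : NNReal) / (q.den : NNReal), ⟨q.num.toNat, q.den, q.pos, rfl⟩, ?_, ?_⟩
  · rw [← NNReal.coe_lt_coe]
    push_cast
    have hnum : ((q.num.toNat : ℕ) : ℝ) = ((q.num : ℤ) : ℝ) := by
      exact_mod_cast congrArg (Int.cast : ℤ → ℝ) (Int.toNat_of_nonneg (Rat.num_nonneg.mpr hq0'))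
    rw [hnum, show ((q.num : ℝ) / (q.den : ℝ)) = (q : ℝ) by exact_mod_cast (Rat.num_div_den q)]
    exact hq1
  · rw [← NNReal.coe_lt_coe]
    push_cast
    have hnum : ((q.num.toNat : ℕ) : ℝ) = ((q.num : ℤ) : ℝ) := by
      exact_mod_cast congrArg (Int.cast : ℤ → ℝ) (Int.toNat_of_nonneg (Rat.num_nonneg.mpr hq0'))
    rw [hnum, show ((q.num : ℝ) / (q.den : ℝ)) = (q : ℝ) by exact_mod_cast (Rat.num_div_den q)]
    exact hq2

lemma add_cont_linear (b : NNReal → ℝ) (hb : ∀ s s' : NNReal, b (s + s') = b s + b s')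
    (hc : Continuous b) : ∀ s : NNReal, b s = b 1 * (s : ℝ) := by
  have B : NNReal →+ ℝ := AddMonoidHom.mk' b hb
  have hnsmul : ∀ (n : ℕ) (x : NNReal), b (n • x) = n • b x := fun n x =>
    (AddMonoidHom.mk' b hb).map_nsmul n x
  have hrat : ∀ m n : ℕ, 0 < n → b ((m : NNReal) / (n : NNReal)) =
      b 1 * (((m : NNReal) / (n : NNReal) : NNReal) : ℝ) := by
    intro m n hn
    have hne : (n : NNReal) ≠ 0 := Nat.cast_ne_zero.mpr hn.ne'
    have h1 : n • ((m : NNReal) / (n : NNReal)) = (m : NNReal) := by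
      rw [nsmul_eq_mul]
      field_simp
    have h2 : b (m : NNReal) = m * b 1 := by
      have := hnsmul m 1
      simpa [nsmul_eq_mul] using this
    have h3 : (n : ℝ) * b ((m : NNReal) / (n : NNReal)) = m * b 1 := by
      have := hnsmul n ((m : NNReal) / (n : NNReal))
      rw [h1, h2] at this
      simpa [nsmul_eq_mul] using this.symm
    have hnR : (n : ℝ) ≠ 0 := Nat.cast_ne_zero.mpr hn.ne'
    push_cast
    field_simp at h3 ⊢
    linarith [h3]
  have : b = fun s : NNReal => b 1 * (s : ℝ) := by
    apply Continuous.ext_on dense_ratlike hc (by continuity)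
    rintro x ⟨m, n, hn, rfl⟩
    exact hrat m n hn
  intro s; exact congrFun this s

private lemma key (d : ℕ) : ∀ f : NNReal → ℝ, Continuous f →
    (∀ s : NNReal, ∃ p : ℝ[X], p.degree < (d : ℕ) ∧
      ∀ t : NNReal, f (s + t) - f t = p.eval (t : ℝ)) →
    ∃ q : ℝ[X], q.degree ≤ (d : ℕ) ∧ ∀ t : NNReal, f t = q.eval (t : ℝ) := by
  induction d with
  | zero =>
    intro f _ h
    refine ⟨Polynomial.C (f 0), by simp [degree_C_le], fun t => ?_⟩
    obtain ⟨p, hdeg, hp⟩ := h t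
    have hp0 : p = 0 := by
      rw [← Polynomial.degree_eq_bot]
      exact Nat.WithBot.lt_zero_iff.mp (by exact_mod_cast hdeg)
    have := hp 0
    rw [hp0] at this
    simp only [eval_zero, add_zero] at this
    rw [eval_C]
    linarith
  | succ d ih =>
    intro f hcont h
    choose p hdeg hp using h
    have hpnat : ∀ s, (p s).natDegree ≤ d := fun s =>
      Polynomial.natDegree_le_iff_degree_le.mpr
        (Order.lt_succ_iff.mp (by exact_mod_cast hdeg s))
    set b : NNReal → ℝ := fun s => (p s).coeff d with hbdef
    -- additivity of b
    have hadd : ∀ s s' : NNReal, b (s + s') = b s + b s' := by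
      intro s s'
      have hps : p (s + s') = Polynomial.taylor (s' : ℝ) (p s) + p s' := by
        apply polyext
        intro t
        rw [eval_add, Polynomial.taylor_eval]
        have e1 := hp (s + s') t
        have e2 := hp s (s' + t)
        have e3 := hp s' t
        have ht : ((s' + t : NNReal) : ℝ) = (t : ℝ) + (s' : ℝ) := by
          push_cast; ring
        rw [ht] at e2
        have hassoc : s + s' + t = s + (s' + t) := add_assoc s s' t
        rw [hassoc] at e1
        linarith
      rw [hbdef]
      simp only []
      rw [hps, coeff_add, coeff_taylor_top (hpnat s)]
    -- continuity of b
    have hinterp : ∀ s : NNReal, p s =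
        Lagrange.interpolate (Finset.range (d + 1)) (fun i : ℕ => (i : ℝ))
          (fun i : ℕ => f (s + (i : NNReal)) - f (i : NNReal)) := by
      intro s
      apply Lagrange.eq_interpolate_of_eval_eq
      · exact fun i _ j _ hij => Nat.cast_injective hij
      · rw [Finset.card_range]; exact hdeg s
      · intro i _
        have := hp s (i : NNReal)
        rw [show (((i : NNReal) : ℝ)) = (i : ℝ) by push_cast; rfl] at this
        exact this.symm
    have hbcont : Continuous b := by
      have hbeq : b = fun s : NNReal => ∑ i ∈ Finset.range (d + 1),
          (f (s + (i : NNReal)) - f (i : NNReal)) *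
            (Lagrange.basis (Finset.range (d + 1)) (fun i : ℕ => (i : ℝ)) i).coeff d := by
        funext s
        rw [hbdef]
        simp only []
        rw [hinterp s, Lagrange.interpolate_apply, Polynomial.finset_sum_coeff]
        exact Finset.sum_congr rfl fun i _ => by rw [coeff_C_mul]
      rw [hbeq]
      apply continuous_finset_sum
      intro i _
      exact ((hcont.comp (continuous_add_right (i : NNReal))).sub continuous_const).mul
        continuous_const
    have hlin := add_cont_linear b hadd hbcont
    set κ : ℝ := b 1 with hκ
    have hd1 : ((d : ℝ) + 1) ≠ 0 := by positivity
    -- apply ih to g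
    set g : NNReal → ℝ := fun t => f t - κ / (d + 1) * (t : ℝ) ^ (d + 1) with hg
    have hgcont : Continuous g := by
      apply hcont.sub
      exact continuous_const.mul ((NNReal.continuous_coe).pow (d + 1))
    have hgpoly : ∀ s : NNReal, ∃ r : ℝ[X], r.degree < (d : ℕ) ∧
        ∀ t : NNReal, g (s + t) - g t = r.eval (t : ℝ) := by
      intro s
      refine ⟨p s - Polynomial.C (κ / (d + 1)) * ((X + C (s : ℝ)) ^ (d + 1) - X ^ (d + 1)),
        ?_, ?_⟩
      · rw [Polynomial.degree_lt_iff_coeff_zero]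
        intro m hm
        have hm' : d ≤ m := by exact_mod_cast hm
        rw [coeff_sub, coeff_C_mul, coeff_sub, coeff_X_add_C_pow, coeff_X_pow]
        rcases eq_or_lt_of_le hm' with heq | hlt
        · -- m = d
          subst heq
          have hcd : (p s).coeff d = κ * (s : ℝ) := hlin s
          rw [hcd]
          have hch : ((d + 1).choose d : ℝ) = (d : ℝ) + 1 := by
            rw [Nat.choose_succ_self_right]; push_cast; ring
          have hpow : (d + 1) - d = 1 := by omega
          rw [hpow, hch]
          simp only [if_neg (by omega : ¬ d = d + 1)]
          field_simp
          ring
        · -- m > d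
          have h1 : (p s).coeff m = 0 :=
            coeff_eq_zero_of_natDegree_lt (lt_of_le_of_lt (hpnat s) hlt)
          rcases eq_or_lt_of_le (Nat.succ_le_of_lt hlt) with heq2 | hlt2
          · -- m = d + 1
            rw [h1, ← heq2]
            simp [Nat.sub_self]
          · -- m > d + 1
            rw [h1, Nat.choose_eq_zero_of_lt hlt2]
            simp only [if_neg (by omega : ¬ m = d + 1)]
            simp
      · intro t
        rw [hg]
        simp only []
        rw [eval_sub, eval_mul, eval_C, eval_sub, eval_pow, eval_pow, eval_add, eval_C, eval_X]
        have := hp s t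
        have hst : ((s + t : NNReal) : ℝ) = (t : ℝ) + (s : ℝ) := by push_cast; ring
        rw [hst]
        linarith
    obtain ⟨q₀, hq₀deg, hq₀⟩ := ih g hgcont hgpoly
    refine ⟨q₀ + Polynomial.C (κ / (d + 1)) * X ^ (d + 1), ?_, ?_⟩
    · apply le_trans (degree_add_le _ _)
      apply max_le
      · exact le_trans hq₀deg (by exact_mod_cast Nat.le_succ d)
      · exact degree_C_mul_X_pow_le _ _
    · intro t
      rw [eval_add, eval_mul, eval_C, eval_pow, eval_X, ← hq₀ t, hg]
      simp


private lemma adeg_to_poly : ∀ (d : ℕ) (f : NNReal → ℝ), ADegLE d f → Continuous f →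
    ∃ q : ℝ[X], q.degree ≤ (d : ℕ) ∧ ∀ t : NNReal, f t = q.eval (t : ℝ) := by
  intro d
  induction d with
  | zero =>
    intro f hf _
    exact ⟨Polynomial.C (f 0), degree_C_le, fun t => by rw [eval_C]; exact hf t 0⟩
  | succ d ih =>
    intro f hf hcont
    apply key (d + 1) f hcont
    intro s
    obtain ⟨p, h1, h2⟩ := ih _ (hf s) ((hcont.comp (continuous_add_left s)).sub hcont)
    refine ⟨p, lt_of_le_of_lt h1 ?_, h2⟩
    exact_mod_cast Nat.lt_succ_self d

/-- Every continuous polynomial map `f : ℝ_{≥0} → ℝ` of degree `≤ d` is a polynomial in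
the usual sense: there are real coefficients `a 0, …, a d` with
`f t = a 0 + a 1 * t + ⋯ + a d * t ^ d` for all `t ≥ 0`. -/
theorem continuous_polynomial_map_real (f : NNReal → ℝ) (d : ℕ)
    (hf : ADegLE d f) (hcont : Continuous f) :
    ∃ a : Fin (d + 1) → ℝ,
      ∀ t : NNReal, f t = ∑ i : Fin (d + 1), a i * (t : ℝ) ^ (i : ℕ) := by
  obtain ⟨q, hq1, hq2⟩ := adeg_to_poly d f hf hcont
  refine ⟨fun i => q.coeff i, fun t => ?_⟩
  rw [hq2 t, Polynomial.eval_eq_sum_range'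
    (lt_of_le_of_lt (Polynomial.natDegree_le_iff_degree_le.mpr hq1) (Nat.lt_succ_self d)),
    ← Fin.sum_univ_eq_sum_range]

end PaperPoly
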